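/- There is an absolute constant C such that the following holds. Let m be a Borel measure on [1,∞) and K ≥ 1 with m([1,a]) ≤ K log a for all a ≥ 2. Then for every q ≥ 2, every h with 1 ≤ h ≤ R, and every R ≥ 2: ∫_1^R ∫_{r+h/4}^{r+3h/4} ( ∫_{[1,∞) ∖ [r, r+h]} ( 2 (1 + |s−z|)^q )^{−1} m(dz) ) ds dr ≤ C^q K h^{3−q} log R. -/

import Mathlib

open MeasureTheory ENNReal Real Set
open scoped Classical

noncomputable section

/-- Euclidean norm of a lattice point `k ∈ ℤ^d`. -/
def znorm {d : ℕ} (k : Fin d → ℤ) : ℝ := Real.sqrt (∑ i, ((k i : ℝ)) ^ 2)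

/-- Euclidean norm of a vector in `ℂ^d`. -/
def cnorm {d : ℕ} (z : Fin d → ℂ) : ℝ := Real.sqrt (∑ i, ‖z i‖ ^ 2)

/-- Pairing `k · z = Σ_i k_i z_i`. -/
def zdot {d : ℕ} (k : Fin d → ℤ) (z : Fin d → ℂ) : ℂ := ∑ i, (k i : ℂ) * z i

/-- Divergence-free in Fourier variables: `k · v(k) = 0` for all `k`. -/
def DivFree {d : ℕ} (v : (Fin d → ℤ) → Fin d → ℂ) : Prop := ∀ k, zdot k (v k) = 0

/-- Fourier coefficients of a real vector field: `v(-k) = conj (v k)`. -/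
def RealCoeff {d : ℕ} (v : (Fin d → ℤ) → Fin d → ℂ) : Prop :=
  ∀ k i, v (-k) i = starRingEnd ℂ (v k i)

/-- A weight: nondecreasing on `[0,∞)` with values in `[1,∞]`. -/
def IsWeight (w : ℝ → ℝ≥0∞) : Prop :=
  MonotoneOn w (Set.Ici 0) ∧ ∀ s, 0 ≤ s → 1 ≤ w s

/-- Weighted ℓ¹ norm `‖w v‖_{ℓ¹} = Σ_k w(|k|)|v(k)|`. -/
def wl1 {d : ℕ} (w : ℝ → ℝ≥0∞) (v : (Fin d → ℤ) → Fin d → ℂ) : ℝ≥0∞ :=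
  ∑' k, w (znorm k) * ENNReal.ofReal (cnorm (v k))

/-- `(w⁻¹ * m_a)(r) = Σ_k w(||k|-r|)⁻¹ |a(k)|²`. -/
def convMass {d : ℕ} (w : ℝ → ℝ≥0∞) (a : (Fin d → ℤ) → ℂ) (r : ℝ) : ℝ≥0∞ :=
  ∑' k, (w |znorm k - r|)⁻¹ * (‖a k‖₊ : ℝ≥0∞) ^ 2

/-- `m_a(E) = Σ_{|k| ∈ E} |a(k)|²`. -/
def massOn {d : ℕ} (a : (Fin d → ℤ) → ℂ) (E : Set ℝ) : ℝ≥0∞ :=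
  ∑' k, if znorm k ∈ E then (‖a k‖₊ : ℝ≥0∞) ^ 2 else 0

/-- Logarithmic density measure `μ_{a,b}(E)`. -/
def logDensity (a b : ℝ) (E : Set ℝ) : ℝ≥0∞ :=
  (ENNReal.ofReal (Real.log (b / a)))⁻¹ * ∫⁻ r in E ∩ Set.Icc a b, ENNReal.ofReal r⁻¹

/-- The right-hand side of the Fourier advection–diffusion system. -/
def fourierRHS {d : ℕ} (ν : ℝ) (v : (Fin d → ℤ) → Fin d → ℂ) (a : (Fin d → ℤ) → ℂ)
    (k : Fin d → ℤ) : ℂ :=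
  Complex.ofReal (-(4 * π ^ 2 * ν * znorm k ^ 2)) * a k
    - 2 * Complex.ofReal π * Complex.I * ∑' j, zdot k (v (k - j)) * a j






lemma sigmaFinite_of_bound (m : Measure ℝ) (K : ℝ)
    (h0 : m (Set.Iio 1) = 0)
    (hm : ∀ a : ℝ, 2 ≤ a → m (Set.Icc 1 a) ≤ ENNReal.ofReal (K * Real.log a)) :
    SigmaFinite m := by
  refine ⟨⟨⟨fun n => Set.Iio ((n : ℝ) + 2), fun _ => trivial, fun n => ?_, ?_⟩⟩⟩
  · have hsub : Set.Iio ((n : ℝ) + 2) ⊆ Set.Iio 1 ∪ Set.Icc 1 ((n : ℝ) + 2) := by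
      intro x hx
      rcases lt_or_ge x 1 with hx1 | hx1
      · exact Or.inl hx1
      · exact Or.inr ⟨hx1, le_of_lt hx⟩
    calc m (Set.Iio ((n : ℝ) + 2)) ≤ m (Set.Iio 1 ∪ Set.Icc 1 ((n : ℝ) + 2)) := measure_mono hsub
      _ ≤ m (Set.Iio 1) + m (Set.Icc 1 ((n : ℝ) + 2)) := measure_union_le _ _
      _ ≤ 0 + ENNReal.ofReal (K * Real.log ((n : ℝ) + 2)) := by
          rw [h0]; gcongr
          exact hm _ (by have := Nat.cast_nonneg (α := ℝ) n; linarith)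
      _ < ⊤ := by simp
  · refine Set.eq_univ_of_forall fun x => ?_
    obtain ⟨n, hn⟩ := exists_nat_gt x
    exact Set.mem_iUnion.2 ⟨n, show x < (n : ℝ) + 2 by linarith⟩


-- the fixed quadratic kernel (real-valued model)
lemma integrable_model (z : ℝ) : Integrable (fun s : ℝ => (2 * (1 + (s - z) ^ 2))⁻¹) := by
  have h : Integrable (fun u : ℝ => 2⁻¹ * (1 + u ^ 2)⁻¹) :=
    integrable_inv_one_add_sq.const_mul _
  have := h.comp_sub_right z
  refine this.congr (Filter.Eventually.of_forall fun s => ?_)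
  simp [mul_inv, mul_comm]

lemma integral_model (z : ℝ) : ∫ s : ℝ, (2 * (1 + (s - z) ^ 2))⁻¹ = π / 2 := by
  have h1 : (fun s : ℝ => (2 * (1 + (s - z) ^ 2))⁻¹)
      = fun s : ℝ => (fun u : ℝ => 2⁻¹ * (1 + u ^ 2)⁻¹) (s - z) := by
    funext s; rw [mul_inv]
  rw [h1, integral_sub_right_eq_self (fun u : ℝ => 2⁻¹ * (1 + u ^ 2)⁻¹) z,
    integral_const_mul, integral_univ_inv_one_add_sq]
  ring

lemma lintegral_model (z : ℝ) :
    ∫⁻ s : ℝ, ENNReal.ofReal ((2 * (1 + (s - z) ^ 2))⁻¹) ≤ 2 := by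
  rw [← ofReal_integral_eq_lintegral_ofReal (integrable_model z)
      (Filter.Eventually.of_forall fun s => by positivity)]
  rw [integral_model]
  calc ENNReal.ofReal (π / 2) ≤ ENNReal.ofReal 2 :=
        ENNReal.ofReal_le_ofReal (by nlinarith [Real.pi_lt_d2])
    _ = 2 := by norm_num


-- real kernel reduction
lemma ker_reduction {q h d : ℝ} (hq : 2 ≤ q) (hh : 1 ≤ h) (hd : h / 4 ≤ d) :
    (2 * (1 + d) ^ q)⁻¹ ≤ (4 / h) ^ (q - 2) * (2 * (1 + d) ^ 2)⁻¹ := by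
  have hd0 : 0 ≤ d := le_trans (by linarith) hd
  have h1d : (1 : ℝ) ≤ 1 + d := by linarith
  have hh4 : (0 : ℝ) < h / 4 := by linarith
  have hsplit : (1 + d) ^ q = (1 + d) ^ (q - 2) * (1 + d) ^ (2 : ℕ) := by
    rw [← Real.rpow_natCast (1 + d) 2, ← Real.rpow_add (by linarith)]
    norm_num
  have hbase : (h / 4) ^ (q - 2) ≤ (1 + d) ^ (q - 2) :=
    Real.rpow_le_rpow hh4.le (by linarith) (by linarith)
  have hpos : (0 : ℝ) < (h / 4) ^ (q - 2) := Real.rpow_pos_of_pos hh4 _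
  have hinv : ((1 + d) ^ (q - 2))⁻¹ ≤ (4 / h) ^ (q - 2) := by
    rw [show (4 : ℝ) / h = (h / 4)⁻¹ by rw [inv_div], Real.inv_rpow hh4.le]
    exact inv_anti₀ hpos hbase
  calc (2 * (1 + d) ^ q)⁻¹
      = ((1 + d) ^ (q - 2))⁻¹ * (2 * (1 + d) ^ 2)⁻¹ := by
        rw [hsplit, show 2 * ((1 + d) ^ (q - 2) * (1 + d) ^ 2)
            = (1 + d) ^ (q - 2) * (2 * (1 + d) ^ 2) by ring, mul_inv]
    _ ≤ (4 / h) ^ (q - 2) * (2 * (1 + d) ^ 2)⁻¹ := by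
        apply mul_le_mul_of_nonneg_right hinv; positivity

-- ENNReal version, for z off the annulus
lemma ker_reduction_ennreal {q h d : ℝ} (hq : 2 ≤ q) (hh : 1 ≤ h) (hd : h / 4 ≤ d) :
    (ENNReal.ofReal (2 * (1 + d) ^ q))⁻¹
      ≤ ENNReal.ofReal ((4 / h) ^ (q - 2)) * (ENNReal.ofReal (2 * (1 + d) ^ 2))⁻¹ := by
  have hd0 : 0 ≤ d := le_trans (by linarith) hd
  have hp1 : (0 : ℝ) < 2 * (1 + d) ^ q := by
    have := Real.rpow_pos_of_pos (show (0:ℝ) < 1 + d by linarith) q; linarith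
  have hp2 : (0 : ℝ) < 2 * (1 + d) ^ 2 := by positivity
  rw [← ENNReal.ofReal_inv_of_pos hp1, ← ENNReal.ofReal_inv_of_pos hp2,
    ← ENNReal.ofReal_mul (by positivity)]
  exact ENNReal.ofReal_le_ofReal (ker_reduction hq hh hd)

-- quadratic kernel dominated by smooth model
lemma k2_le_model (s z : ℝ) :
    (ENNReal.ofReal (2 * (1 + |s - z|) ^ 2))⁻¹
      ≤ ENNReal.ofReal ((2 * (1 + (s - z) ^ 2))⁻¹) := by
  rw [← ENNReal.ofReal_inv_of_pos (by positivity)]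
  apply ENNReal.ofReal_le_ofReal
  apply inv_anti₀ (by positivity)
  nlinarith [sq_abs (s - z), abs_nonneg (s - z)]

-- tail pointwise bound
lemma k2_tail {s z Rv : ℝ} (hR : 2 ≤ Rv) (hz : 4 * Rv ≤ z) (hs : s ∈ Set.Icc 1 (2 * Rv)) :
    (ENNReal.ofReal (2 * (1 + |s - z|) ^ 2))⁻¹ ≤ ENNReal.ofReal (2 / z ^ 2) := by
  obtain ⟨hs1, hs2⟩ := hs
  have hz0 : (0 : ℝ) < z := by linarith
  have habs : z / 2 ≤ |s - z| := by
    rw [abs_sub_comm, abs_of_nonneg (by linarith)]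
    linarith
  rw [← ENNReal.ofReal_inv_of_pos (by positivity)]
  apply ENNReal.ofReal_le_ofReal
  rw [show (2 : ℝ) / z ^ 2 = (z ^ 2 / 2)⁻¹ by rw [inv_div]]
  apply inv_anti₀ (by positivity)
  nlinarith


lemma inv_le_four_mul {z : ℝ} (hz : 8 ≤ z) :
    ENNReal.ofReal z⁻¹ ≤ 4 * ∫⁻ t in Set.Ioi z, ENNReal.ofReal ((t ^ 2)⁻¹) := by
  have hz0 : (0 : ℝ) < z := by linarith
  have h1 : ∫⁻ t in Set.Ioc z (2 * z), ENNReal.ofReal (((2 * z) ^ 2)⁻¹)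
      ≤ ∫⁻ t in Set.Ioc z (2 * z), ENNReal.ofReal ((t ^ 2)⁻¹) := by
    refine setLIntegral_mono' measurableSet_Ioc fun t ht => ?_
    exact ENNReal.ofReal_le_ofReal (inv_anti₀ (show (0:ℝ) < t ^ 2 by nlinarith [ht.1])
      (by nlinarith [ht.1, ht.2]))
  have h2 : ∫⁻ _t in Set.Ioc z (2 * z), ENNReal.ofReal (((2 * z) ^ 2)⁻¹)
      = ENNReal.ofReal (((2 * z) ^ 2)⁻¹ * z) := by
    rw [setLIntegral_const, Real.volume_Ioc, show 2 * z - z = z by ring,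
      ← ENNReal.ofReal_mul (by positivity)]
  have h3 : ENNReal.ofReal z⁻¹ = 4 * ENNReal.ofReal (((2 * z) ^ 2)⁻¹ * z) := by
    rw [show (4 : ℝ≥0∞) = ENNReal.ofReal 4 by norm_num,
      ← ENNReal.ofReal_mul (by norm_num)]
    congr 1
    field_simp
    ring
  rw [h3]
  refine mul_le_mul_right ?_ _
  rw [← h2]
  exact h1.trans (lintegral_mono_set Set.Ioc_subset_Ioi_self)

lemma rpow_tail {A : ℝ} (hA : 4 ≤ A) :
    ∫⁻ t in Set.Ioi A, ENNReal.ofReal (t ^ (-(3 : ℝ) / 2)) ≤ 1 := by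
  have hA0 : (0 : ℝ) < A := by linarith
  have hint := integrableOn_Ioi_rpow_of_lt (show (-(3 : ℝ) / 2) < -1 by norm_num) hA0
  rw [← ofReal_integral_eq_lintegral_ofReal hint
      ((ae_restrict_iff' measurableSet_Ioi).2 (Filter.Eventually.of_forall fun t ht =>
        Real.rpow_nonneg (le_of_lt (hA0.trans ht)) _))]
  rw [integral_Ioi_rpow_of_lt (by norm_num) hA0]
  have hsq : (2 : ℝ) ≤ A ^ ((1 : ℝ) / 2) := by
    have h4 : (4 : ℝ) ^ ((1 : ℝ) / 2) ≤ A ^ ((1 : ℝ) / 2) :=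
      Real.rpow_le_rpow (by norm_num) hA (by norm_num)
    have : (4 : ℝ) ^ ((1 : ℝ) / 2) = 2 := by
      rw [show (4 : ℝ) = 2 ^ (2 : ℕ) by norm_num, ← Real.rpow_natCast 2 2,
        ← Real.rpow_mul (by norm_num)]
      norm_num
    linarith
  have hneg : A ^ (-(3 : ℝ) / 2 + 1) = (A ^ ((1 : ℝ) / 2))⁻¹ := by
    rw [show -(3 : ℝ) / 2 + 1 = -((1 : ℝ) / 2) by ring, Real.rpow_neg hA0.le]
  calc ENNReal.ofReal (-A ^ (-(3 : ℝ) / 2 + 1) / (-(3 : ℝ) / 2 + 1))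
      ≤ ENNReal.ofReal 1 := by
        apply ENNReal.ofReal_le_ofReal
        rw [hneg]
        have hinv : (A ^ ((1 : ℝ) / 2))⁻¹ ≤ 2⁻¹ := inv_anti₀ (by norm_num) hsq
        rw [show (-(3 : ℝ) / 2 + 1) = -(1/2 : ℝ) by ring]
        rw [div_le_iff_of_neg (by norm_num)]
        linarith
    _ = 1 := ENNReal.ofReal_one
lemma tail_bound (m : Measure ℝ) [SigmaFinite m] {K Rv : ℝ} (hK : 1 ≤ K) (hR : 2 ≤ Rv)
    (hm : ∀ a : ℝ, 2 ≤ a → m (Set.Icc 1 a) ≤ ENNReal.ofReal (K * Real.log a)) :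
    ∫⁻ z in Set.Ici (4 * Rv), ENNReal.ofReal z⁻¹ ∂m ≤ ENNReal.ofReal (8 * K) := by
  set A := 4 * Rv with hAdef
  have hA8 : (8 : ℝ) ≤ A := by rw [hAdef]; linarith
  set f : ℝ → ℝ≥0∞ := fun t => ENNReal.ofReal ((t ^ 2)⁻¹) with hf
  have hfmeas : Measurable f := ((measurable_id.pow_const 2).inv).ennreal_ofReal
  set I : ℝ → ℝ≥0∞ := fun z => ∫⁻ t in Set.Ioi A, (Set.Ioi z).indicator f t with hI
  -- step 1 : pointwise domination by a double integral
  have step1 : ∫⁻ z in Set.Ici A, ENNReal.ofReal z⁻¹ ∂m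
      ≤ ∫⁻ z in Set.Ici A, 4 * I z ∂m := by
    apply setLIntegral_mono' measurableSet_Ici
    intro z hz
    have hid : I z = ∫⁻ t in Set.Ioi z, f t := by
      show ∫⁻ t in Set.Ioi A, (Set.Ioi z).indicator f t = _
      rw [lintegral_indicator measurableSet_Ioi, Measure.restrict_restrict measurableSet_Ioi,
        Set.inter_eq_self_of_subset_left (Set.Ioi_subset_Ioi hz)]
    rw [hid]
    exact inv_le_four_mul (le_trans hA8 hz)
  -- measurability of the kernel for Tonelli
  have hker : Measurable (Function.uncurry fun z t => (Set.Ioi z).indicator f t) := by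
    have h : (Function.uncurry fun z t => (Set.Ioi z).indicator f t)
        = ({p : ℝ × ℝ | p.1 < p.2}).indicator (fun p => f p.2) := by
      ext p
      by_cases hp : p.1 < p.2 <;>
        simp [Function.uncurry, Set.indicator_apply, Set.mem_Ioi, hp]
    rw [h]
    exact Measurable.indicator (hfmeas.comp measurable_snd)
      (measurableSet_lt measurable_fst measurable_snd)
  have hinner_meas : Measurable I := Measurable.lintegral_prod_right hker
  -- step 2 : pull out the 4 and swap the integrals
  have step2a : ∫⁻ z in Set.Ici A, 4 * I z ∂m = 4 * ∫⁻ z in Set.Ici A, I z ∂m :=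
    lintegral_const_mul 4 hinner_meas
  have step2b : ∫⁻ z in Set.Ici A, I z ∂m
      = ∫⁻ t in Set.Ioi A, ∫⁻ z in Set.Ici A, (Set.Ioi z).indicator f t ∂m :=
    lintegral_lintegral_swap hker.aemeasurable
  -- step 3 : evaluate the inner integral
  have step3 : ∀ t ∈ Set.Ioi A, ∫⁻ z in Set.Ici A, (Set.Ioi z).indicator f t ∂m
      ≤ f t * ENNReal.ofReal (K * Real.log t) := by
    intro t ht
    have ht2 : (2 : ℝ) ≤ t := by have := Set.mem_Ioi.mp ht; linarith
    have heq : ∀ z, (Set.Ioi z).indicator f t = (Set.Iio t).indicator (fun _ => f t) z := by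
      intro z
      by_cases hp : z < t <;> simp [Set.indicator_apply, Set.mem_Ioi, Set.mem_Iio, hp]
    calc ∫⁻ z in Set.Ici A, (Set.Ioi z).indicator f t ∂m
        = ∫⁻ z in Set.Ici A, (Set.Iio t).indicator (fun _ => f t) z ∂m :=
          lintegral_congr fun z => heq z
      _ = f t * m (Set.Iio t ∩ Set.Ici A) := by
          rw [lintegral_indicator measurableSet_Iio, Measure.restrict_restrict measurableSet_Iio,
            lintegral_const, Measure.restrict_apply_univ]
      _ ≤ f t * ENNReal.ofReal (K * Real.log t) := by
          refine mul_le_mul_right (le_trans (measure_mono fun x hx => ?_) (hm t ht2)) _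
          exact ⟨by have := hx.2; simp only [Set.mem_Ici] at this; linarith,
            le_of_lt hx.1⟩
  -- step 4 : bound the resulting single integral
  have hrpmeas : Measurable fun t : ℝ => ENNReal.ofReal (t ^ (-(3 : ℝ) / 2)) := by
    fun_prop
  have step4 : ∫⁻ t in Set.Ioi A, f t * ENNReal.ofReal (K * Real.log t)
      ≤ ENNReal.ofReal (2 * K) * ∫⁻ t in Set.Ioi A, ENNReal.ofReal (t ^ (-(3 : ℝ) / 2)) := by
    rw [← lintegral_const_mul _ hrpmeas]
    refine setLIntegral_mono' measurableSet_Ioi fun t ht => ?_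
    have ht8 : (8 : ℝ) < t := lt_of_le_of_lt hA8 (Set.mem_Ioi.mp ht)
    have ht0 : (0 : ℝ) < t := by linarith
    have hlog : Real.log t ≤ 2 * Real.sqrt t := by
      have h1 : Real.log t = 2 * Real.log (Real.sqrt t) := by
        rw [Real.log_sqrt ht0.le]; ring
      have h2 : Real.log (Real.sqrt t) ≤ Real.sqrt t - 1 :=
        Real.log_le_sub_one_of_pos (Real.sqrt_pos.mpr ht0)
      nlinarith [Real.sqrt_nonneg t]
    have hrw : Real.sqrt t * (t ^ 2)⁻¹ = t ^ (-(3 : ℝ) / 2) := by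
      rw [Real.sqrt_eq_rpow, ← Real.rpow_natCast t 2, ← Real.rpow_neg ht0.le,
        ← Real.rpow_add ht0]
      norm_num
    have hreal : (t ^ 2)⁻¹ * (K * Real.log t) ≤ 2 * K * t ^ (-(3 : ℝ) / 2) := by
      have hKl : K * Real.log t ≤ K * (2 * Real.sqrt t) :=
        mul_le_mul_of_nonneg_left hlog (by linarith)
      calc (t ^ 2)⁻¹ * (K * Real.log t) ≤ (t ^ 2)⁻¹ * (K * (2 * Real.sqrt t)) :=
            mul_le_mul_of_nonneg_left hKl (by positivity)
        _ = 2 * K * (Real.sqrt t * (t ^ 2)⁻¹) := by ring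
        _ = 2 * K * t ^ (-(3 : ℝ) / 2) := by rw [hrw]
    calc f t * ENNReal.ofReal (K * Real.log t)
        = ENNReal.ofReal ((t ^ 2)⁻¹ * (K * Real.log t)) := by
          rw [← ENNReal.ofReal_mul (by positivity)]
      _ ≤ ENNReal.ofReal (2 * K * t ^ (-(3 : ℝ) / 2)) := ENNReal.ofReal_le_ofReal hreal
      _ = ENNReal.ofReal (2 * K) * ENNReal.ofReal (t ^ (-(3 : ℝ) / 2)) := by
          rw [← ENNReal.ofReal_mul (by positivity)]
  -- assemble
  calc ∫⁻ z in Set.Ici A, ENNReal.ofReal z⁻¹ ∂m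
      ≤ ∫⁻ z in Set.Ici A, 4 * I z ∂m := step1
    _ = 4 * ∫⁻ t in Set.Ioi A, ∫⁻ z in Set.Ici A, (Set.Ioi z).indicator f t ∂m := by
        rw [step2a, step2b]
    _ ≤ 4 * ∫⁻ t in Set.Ioi A, f t * ENNReal.ofReal (K * Real.log t) :=
        mul_le_mul_right (setLIntegral_mono' measurableSet_Ioi step3) _
    _ ≤ 4 * (ENNReal.ofReal (2 * K)
          * ∫⁻ t in Set.Ioi A, ENNReal.ofReal (t ^ (-(3 : ℝ) / 2))) :=
        mul_le_mul_right step4 _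
    _ ≤ 4 * (ENNReal.ofReal (2 * K) * 1) := by
        refine mul_le_mul_right (mul_le_mul_right (rpow_tail (by linarith)) _) _
    _ = ENNReal.ofReal (8 * K) := by
        rw [mul_one, show (4 : ℝ≥0∞) = ENNReal.ofReal 4 by norm_num,
          ← ENNReal.ofReal_mul (by norm_num)]
        congr 1
        ring

-- measurability of the quadratic kernel
lemma k2_meas : Measurable (Function.uncurry fun s z : ℝ =>
    (ENNReal.ofReal (2 * (1 + |s - z|) ^ 2))⁻¹) := by
  have hc : Continuous fun p : ℝ × ℝ => 2 * (1 + |p.1 - p.2|) ^ 2 :=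
    continuous_const.mul ((continuous_const.add (continuous_fst.sub continuous_snd).abs).pow 2)
  exact hc.measurable.ennreal_ofReal.inv

lemma g_le_two (Rv z : ℝ) :
    ∫⁻ s in Set.Icc 1 (2 * Rv), (ENNReal.ofReal (2 * (1 + |s - z|) ^ 2))⁻¹ ≤ 2 := by
  calc ∫⁻ s in Set.Icc 1 (2 * Rv), (ENNReal.ofReal (2 * (1 + |s - z|) ^ 2))⁻¹
      ≤ ∫⁻ s in Set.Icc 1 (2 * Rv), ENNReal.ofReal ((2 * (1 + (s - z) ^ 2))⁻¹) :=
        lintegral_mono fun s => k2_le_model s z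
    _ ≤ ∫⁻ s : ℝ, ENNReal.ofReal ((2 * (1 + (s - z) ^ 2))⁻¹) :=
        setLIntegral_le_lintegral _ _
    _ ≤ 2 := lintegral_model z

lemma g_tail {Rv z : ℝ} (hR : 2 ≤ Rv) (hz : 4 * Rv ≤ z) :
    ∫⁻ s in Set.Icc 1 (2 * Rv), (ENNReal.ofReal (2 * (1 + |s - z|) ^ 2))⁻¹
      ≤ ENNReal.ofReal z⁻¹ := by
  have hz0 : (0 : ℝ) < z := by linarith
  calc ∫⁻ s in Set.Icc 1 (2 * Rv), (ENNReal.ofReal (2 * (1 + |s - z|) ^ 2))⁻¹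
      ≤ ∫⁻ _s in Set.Icc 1 (2 * Rv), ENNReal.ofReal (2 / z ^ 2) :=
        setLIntegral_mono' measurableSet_Icc fun s hs => k2_tail hR hz hs
    _ = ENNReal.ofReal (2 / z ^ 2) * ENNReal.ofReal (2 * Rv - 1) := by
        rw [setLIntegral_const, Real.volume_Icc]
    _ = ENNReal.ofReal (2 / z ^ 2 * (2 * Rv - 1)) := by
        rw [← ENNReal.ofReal_mul (by positivity)]
    _ ≤ ENNReal.ofReal z⁻¹ := by
        apply ENNReal.ofReal_le_ofReal
        rw [inv_eq_one_div, div_mul_eq_mul_div, div_le_div_iff₀ (by positivity) hz0]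
        nlinarith

-- bound for the z-integral of g against m
lemma mid_bound (m : Measure ℝ) [SigmaFinite m] {K Rv : ℝ} (hK : 1 ≤ K) (hR : 2 ≤ Rv)
    (hm : ∀ a : ℝ, 2 ≤ a → m (Set.Icc 1 a) ≤ ENNReal.ofReal (K * Real.log a)) :
    ∫⁻ z in Set.Ici 1,
        (∫⁻ s in Set.Icc 1 (2 * Rv), (ENNReal.ofReal (2 * (1 + |s - z|) ^ 2))⁻¹) ∂m
      ≤ ENNReal.ofReal (18 * K * Real.log Rv) := by
  have h14 : (1 : ℝ) ≤ 4 * Rv := by linarith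
  have hdisj : Disjoint (Set.Ico (1 : ℝ) (4 * Rv)) (Set.Ici (4 * Rv)) :=
    Set.disjoint_left.mpr fun x hx hx' => (not_le.mpr hx.2) hx'
  have hlogR : (0 : ℝ) < Real.log Rv := Real.log_pos (by linarith)
  have hlog2 : Real.log 2 ≤ Real.log Rv := Real.log_le_log (by norm_num) hR
  have hlog4R : Real.log (4 * Rv) ≤ 3 * Real.log Rv := by
    rw [Real.log_mul (by norm_num) (by linarith),
      show (4 : ℝ) = 2 ^ 2 by norm_num, Real.log_pow]
    have := Real.log_two_lt_d9
    push_cast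
    nlinarith [Real.log_two_gt_d9]
  have hsplit : Set.Ici (1 : ℝ) = Set.Ico 1 (4 * Rv) ∪ Set.Ici (4 * Rv) :=
    (Set.Ico_union_Ici_eq_Ici h14).symm
  rw [hsplit, lintegral_union measurableSet_Ici hdisj]
  have part1 : ∫⁻ z in Set.Ico 1 (4 * Rv),
      (∫⁻ s in Set.Icc 1 (2 * Rv), (ENNReal.ofReal (2 * (1 + |s - z|) ^ 2))⁻¹) ∂m
      ≤ ENNReal.ofReal (6 * K * Real.log Rv) := by
    calc ∫⁻ z in Set.Ico 1 (4 * Rv),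
        (∫⁻ s in Set.Icc 1 (2 * Rv), (ENNReal.ofReal (2 * (1 + |s - z|) ^ 2))⁻¹) ∂m
        ≤ ∫⁻ _z in Set.Ico 1 (4 * Rv), 2 ∂m :=
          setLIntegral_mono' measurableSet_Ico fun z _ => g_le_two Rv z
      _ = 2 * m (Set.Ico 1 (4 * Rv)) := setLIntegral_const _ _
      _ ≤ 2 * ENNReal.ofReal (K * Real.log (4 * Rv)) := by
          refine mul_le_mul_right (le_trans (measure_mono Set.Ico_subset_Icc_self) ?_) _
          exact hm _ (by linarith)
      _ ≤ ENNReal.ofReal (6 * K * Real.log Rv) := by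
          rw [show (2 : ℝ≥0∞) = ENNReal.ofReal 2 by norm_num,
            ← ENNReal.ofReal_mul (by norm_num)]
          apply ENNReal.ofReal_le_ofReal
          nlinarith [Real.log_nonneg (show (1:ℝ) ≤ 4 * Rv by linarith)]
  have part2 : ∫⁻ z in Set.Ici (4 * Rv),
      (∫⁻ s in Set.Icc 1 (2 * Rv), (ENNReal.ofReal (2 * (1 + |s - z|) ^ 2))⁻¹) ∂m
      ≤ ENNReal.ofReal (12 * K * Real.log Rv) := by
    calc ∫⁻ z in Set.Ici (4 * Rv),
        (∫⁻ s in Set.Icc 1 (2 * Rv), (ENNReal.ofReal (2 * (1 + |s - z|) ^ 2))⁻¹) ∂m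
        ≤ ∫⁻ z in Set.Ici (4 * Rv), ENNReal.ofReal z⁻¹ ∂m :=
          setLIntegral_mono' measurableSet_Ici fun z hz => g_tail hR hz
      _ ≤ ENNReal.ofReal (8 * K) := tail_bound m hK hR hm
      _ ≤ ENNReal.ofReal (12 * K * Real.log Rv) := by
          apply ENNReal.ofReal_le_ofReal
          nlinarith [Real.log_two_gt_d9]
  calc _ ≤ ENNReal.ofReal (6 * K * Real.log Rv) + ENNReal.ofReal (12 * K * Real.log Rv) :=
        add_le_add part1 part2
    _ = ENNReal.ofReal (18 * K * Real.log Rv) := by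
        rw [← ENNReal.ofReal_add (by positivity) (by positivity)]
        congr 1
        ring

lemma final_arith {q h R K : ℝ} (hq : 2 ≤ q) (hh : 1 ≤ h) (hK : 1 ≤ K) (hR : 2 ≤ R) :
    (4 / h) ^ (q - 2) * (h / 2 * (18 * K * Real.log R))
      ≤ 4 ^ q * K * h ^ (3 - q) * Real.log R := by
  have hh0 : (0 : ℝ) < h := by linarith
  have hL : 0 ≤ Real.log R := Real.log_nonneg (by linarith)
  have e1 : (4 / h) ^ (q - 2) = 4 ^ (q - 2) * (h ^ (q - 2))⁻¹ := by
    rw [Real.div_rpow (by norm_num) hh0.le, div_eq_mul_inv]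
  have e2 : (4 : ℝ) ^ (q - 2) = 4 ^ q / 16 := by
    rw [Real.rpow_sub (by norm_num : (0:ℝ) < 4)]
    norm_num
  have e3 : (h ^ (q - 2))⁻¹ * h = h ^ (3 - q) := by
    rw [← Real.rpow_neg hh0.le, show (3 : ℝ) - q = -(q - 2) + 1 by ring,
      Real.rpow_add hh0, Real.rpow_one]
  have hX : 0 ≤ 4 ^ q * K * Real.log R * h ^ (3 - q) :=
    mul_nonneg (mul_nonneg (mul_nonneg (Real.rpow_nonneg (by norm_num) q) (by linarith)) hL)
      (Real.rpow_nonneg hh0.le _)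
  calc (4 / h) ^ (q - 2) * (h / 2 * (18 * K * Real.log R))
      = (4 ^ q * K * Real.log R) * ((h ^ (q - 2))⁻¹ * h) * (9 / 16) := by rw [e1, e2]; ring
    _ = (4 ^ q * K * Real.log R) * h ^ (3 - q) * (9 / 16) := by rw [e3]
    _ ≤ 4 ^ q * K * h ^ (3 - q) * Real.log R := by nlinarith [hX]

/-- the averaged off-annulus contribution to the convolution `w_q⁻¹ * m`
is bounded by `C^q K h^{3-q} log R`. -/
theorem off_annulus_contribution_bound :
    ∃ C : ℝ, 0 < C ∧
      ∀ (m : Measure ℝ) (K : ℝ), 1 ≤ K → m (Set.Iio 1) = 0 →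
      (∀ a : ℝ, 2 ≤ a → m (Set.Icc 1 a) ≤ ENNReal.ofReal (K * Real.log a)) →
      ∀ q h R : ℝ, 2 ≤ q → 1 ≤ h → h ≤ R → 2 ≤ R →
        (∫⁻ r in Set.Icc (1 : ℝ) R, ∫⁻ s in Set.Icc (r + h / 4) (r + 3 * h / 4),
            ∫⁻ z in Set.Ici (1 : ℝ) \ Set.Icc r (r + h),
              (ENNReal.ofReal (2 * (1 + |s - z|) ^ q))⁻¹ ∂m)
          ≤ ENNReal.ofReal (C ^ q * K * h ^ (3 - q) * Real.log R) := by
  refine ⟨4, by norm_num, ?_⟩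
  intro m K hK h0 hm q h R hq hh hhR hR2
  haveI : SigmaFinite m := sigmaFinite_of_bound m K h0 hm
  set κ2 : ℝ → ℝ → ℝ≥0∞ := fun s z => (ENNReal.ofReal (2 * (1 + |s - z|) ^ 2))⁻¹ with hκ2def
  have hκ2meas : Measurable (Function.uncurry κ2) := k2_meas
  set J : ℝ → ℝ≥0∞ := fun s => ∫⁻ z in Set.Ici 1, κ2 s z ∂m with hJdef
  have hJmeas : Measurable J := Measurable.lintegral_prod_right hκ2meas
  set c : ℝ≥0∞ := ENNReal.ofReal ((4 / h) ^ (q - 2)) with hcdef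
  have hcne : c ≠ ⊤ := ENNReal.ofReal_ne_top
  -- Step A : reduce the exponent-q kernel to the quadratic kernel, off the annulus
  have stepA : ∀ r : ℝ, ∀ s ∈ Set.Icc (r + h / 4) (r + 3 * h / 4),
      (∫⁻ z in Set.Ici (1 : ℝ) \ Set.Icc r (r + h),
          (ENNReal.ofReal (2 * (1 + |s - z|) ^ q))⁻¹ ∂m) ≤ c * J s := by
    intro r s hs
    obtain ⟨hs1, hs2⟩ := Set.mem_Icc.mp hs
    have hmono : ∀ z ∈ Set.Ici (1 : ℝ) \ Set.Icc r (r + h),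
        (ENNReal.ofReal (2 * (1 + |s - z|) ^ q))⁻¹ ≤ c * κ2 s z := by
      intro z hz
      have hd : h / 4 ≤ |s - z| := by
        rcases not_and_or.mp (fun hmem => hz.2 (Set.mem_Icc.mpr hmem)) with hlt | hgt
        · push_neg at hlt
          calc h / 4 ≤ s - z := by linarith
            _ ≤ |s - z| := le_abs_self _
        · push_neg at hgt
          calc h / 4 ≤ z - s := by linarith
            _ ≤ |s - z| := by rw [abs_sub_comm]; exact le_abs_self _
      exact ker_reduction_ennreal hq hh hd
    calc (∫⁻ z in Set.Ici (1 : ℝ) \ Set.Icc r (r + h),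
          (ENNReal.ofReal (2 * (1 + |s - z|) ^ q))⁻¹ ∂m)
        ≤ ∫⁻ z in Set.Ici (1 : ℝ) \ Set.Icc r (r + h), c * κ2 s z ∂m :=
          setLIntegral_mono' (measurableSet_Ici.diff measurableSet_Icc) hmono
      _ ≤ ∫⁻ z in Set.Ici (1 : ℝ), c * κ2 s z ∂m := lintegral_mono_set Set.diff_subset
      _ = c * J s := lintegral_const_mul' c _ hcne
  -- Step B : apply Step A under the outer two integrals and pull out the constant
  have stepB : (∫⁻ r in Set.Icc (1 : ℝ) R, ∫⁻ s in Set.Icc (r + h / 4) (r + 3 * h / 4),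
        ∫⁻ z in Set.Ici (1 : ℝ) \ Set.Icc r (r + h),
          (ENNReal.ofReal (2 * (1 + |s - z|) ^ q))⁻¹ ∂m)
      ≤ c * ∫⁻ r in Set.Icc (1 : ℝ) R,
          ∫⁻ s in Set.Icc (r + h / 4) (r + 3 * h / 4), J s := by
    have h1 : ∀ r : ℝ, (∫⁻ s in Set.Icc (r + h / 4) (r + 3 * h / 4),
        ∫⁻ z in Set.Ici (1 : ℝ) \ Set.Icc r (r + h),
          (ENNReal.ofReal (2 * (1 + |s - z|) ^ q))⁻¹ ∂m)
        ≤ c * ∫⁻ s in Set.Icc (r + h / 4) (r + 3 * h / 4), J s := fun r =>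
      calc (∫⁻ s in Set.Icc (r + h / 4) (r + 3 * h / 4),
          ∫⁻ z in Set.Ici (1 : ℝ) \ Set.Icc r (r + h),
            (ENNReal.ofReal (2 * (1 + |s - z|) ^ q))⁻¹ ∂m)
          ≤ ∫⁻ s in Set.Icc (r + h / 4) (r + 3 * h / 4), c * J s :=
            setLIntegral_mono' measurableSet_Icc (stepA r)
        _ = c * ∫⁻ s in Set.Icc (r + h / 4) (r + 3 * h / 4), J s :=
            lintegral_const_mul' c _ hcne
    calc (∫⁻ r in Set.Icc (1 : ℝ) R, ∫⁻ s in Set.Icc (r + h / 4) (r + 3 * h / 4),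
          ∫⁻ z in Set.Ici (1 : ℝ) \ Set.Icc r (r + h),
            (ENNReal.ofReal (2 * (1 + |s - z|) ^ q))⁻¹ ∂m)
        ≤ ∫⁻ r in Set.Icc (1 : ℝ) R,
            c * ∫⁻ s in Set.Icc (r + h / 4) (r + 3 * h / 4), J s :=
          setLIntegral_mono' measurableSet_Icc fun r _ => h1 r
      _ = c * ∫⁻ r in Set.Icc (1 : ℝ) R,
            ∫⁻ s in Set.Icc (r + h / 4) (r + 3 * h / 4), J s :=
          lintegral_const_mul' c _ hcne
  -- Step C : the covering argument in (r,s)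
  have hFmeas : Measurable (Function.uncurry fun r s : ℝ =>
      (Set.Icc (r + h / 4) (r + 3 * h / 4)).indicator J s) := by
    have hset : MeasurableSet {p : ℝ × ℝ | p.1 + h / 4 ≤ p.2 ∧ p.2 ≤ p.1 + 3 * h / 4} :=
      (measurableSet_le (measurable_fst.add_const _) measurable_snd).inter
        (measurableSet_le measurable_snd (measurable_fst.add_const _))
    have heq : (Function.uncurry fun r s : ℝ =>
        (Set.Icc (r + h / 4) (r + 3 * h / 4)).indicator J s)
        = ({p : ℝ × ℝ | p.1 + h / 4 ≤ p.2 ∧ p.2 ≤ p.1 + 3 * h / 4}).indicator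
            (fun p => J p.2) := by
      ext p
      by_cases hp : p.1 + h / 4 ≤ p.2 ∧ p.2 ≤ p.1 + 3 * h / 4 <;>
        simp [Function.uncurry, Set.indicator_apply, Set.mem_Icc, hp]
    rw [heq]
    exact (hJmeas.comp measurable_snd).indicator hset
  have stepC : (∫⁻ r in Set.Icc (1 : ℝ) R,
        ∫⁻ s in Set.Icc (r + h / 4) (r + 3 * h / 4), J s)
      ≤ ENNReal.ofReal (h / 2) * ∫⁻ s in Set.Icc (1 : ℝ) (2 * R), J s := by
    calc (∫⁻ r in Set.Icc (1 : ℝ) R, ∫⁻ s in Set.Icc (r + h / 4) (r + 3 * h / 4), J s)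
        = ∫⁻ r in Set.Icc (1 : ℝ) R,
            ∫⁻ s, (Set.Icc (r + h / 4) (r + 3 * h / 4)).indicator J s :=
          lintegral_congr fun r => (lintegral_indicator measurableSet_Icc J).symm
      _ = ∫⁻ s, ∫⁻ r in Set.Icc (1 : ℝ) R,
            (Set.Icc (r + h / 4) (r + 3 * h / 4)).indicator J s :=
          lintegral_lintegral_swap hFmeas.aemeasurable
      _ ≤ ∫⁻ s, (Set.Icc (1 : ℝ) (2 * R)).indicator
            (fun s' => ENNReal.ofReal (h / 2) * J s') s := by
          apply lintegral_mono
          intro s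
          by_cases hsin : s ∈ Set.Icc (1 : ℝ) (2 * R)
          · have hiff : ∀ r : ℝ, s ∈ Set.Icc (r + h / 4) (r + 3 * h / 4)
                ↔ r ∈ Set.Icc (s - 3 * h / 4) (s - h / 4) := by
              intro r
              simp only [Set.mem_Icc]
              constructor <;> intro hp <;>
                exact ⟨by linarith [hp.1, hp.2], by linarith [hp.1, hp.2]⟩
            have heq2 : ∀ r : ℝ, (Set.Icc (r + h / 4) (r + 3 * h / 4)).indicator J s
                = (Set.Icc (s - 3 * h / 4) (s - h / 4)).indicator (fun _ => J s) r := by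
              intro r
              simp only [Set.indicator_apply]
              rw [if_congr (hiff r) rfl rfl]
            calc ∫⁻ r in Set.Icc (1 : ℝ) R,
                  (Set.Icc (r + h / 4) (r + 3 * h / 4)).indicator J s
                = ∫⁻ r in Set.Icc (1 : ℝ) R,
                    (Set.Icc (s - 3 * h / 4) (s - h / 4)).indicator (fun _ => J s) r :=
                  lintegral_congr fun r => heq2 r
              _ = J s * volume (Set.Icc (s - 3 * h / 4) (s - h / 4) ∩ Set.Icc (1 : ℝ) R) := by
                  rw [lintegral_indicator measurableSet_Icc,
                    Measure.restrict_restrict measurableSet_Icc,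
                    lintegral_const, Measure.restrict_apply_univ]
              _ ≤ J s * ENNReal.ofReal (h / 2) := by
                  refine mul_le_mul_right (le_trans (measure_mono Set.inter_subset_left) ?_) _
                  rw [Real.volume_Icc]
                  exact ENNReal.ofReal_le_ofReal (by linarith)
              _ = (Set.Icc (1 : ℝ) (2 * R)).indicator
                    (fun s' => ENNReal.ofReal (h / 2) * J s') s := by
                  rw [Set.indicator_of_mem hsin, mul_comm]
          · have hzero : ∀ r ∈ Set.Icc (1 : ℝ) R,
                (Set.Icc (r + h / 4) (r + 3 * h / 4)).indicator J s = 0 := by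
              intro r hr
              apply Set.indicator_of_notMem
              intro hmem
              obtain ⟨hr1, hr2⟩ := Set.mem_Icc.mp hr
              obtain ⟨hm1, hm2⟩ := Set.mem_Icc.mp hmem
              exact hsin (Set.mem_Icc.mpr ⟨by linarith, by linarith⟩)
            calc ∫⁻ r in Set.Icc (1 : ℝ) R,
                  (Set.Icc (r + h / 4) (r + 3 * h / 4)).indicator J s
                ≤ ∫⁻ _r in Set.Icc (1 : ℝ) R, 0 :=
                  setLIntegral_mono' measurableSet_Icc fun r hr => le_of_eq (hzero r hr)
              _ = 0 := by simp
              _ ≤ _ := zero_le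
      _ = ∫⁻ s in Set.Icc (1 : ℝ) (2 * R), ENNReal.ofReal (h / 2) * J s :=
          lintegral_indicator measurableSet_Icc _
      _ = ENNReal.ofReal (h / 2) * ∫⁻ s in Set.Icc (1 : ℝ) (2 * R), J s :=
          lintegral_const_mul' _ _ ENNReal.ofReal_ne_top
  -- Step D : swap s and z, then use the z-integral bound
  have stepD : (∫⁻ s in Set.Icc (1 : ℝ) (2 * R), J s)
      ≤ ENNReal.ofReal (18 * K * Real.log R) := by
    have hswap : (∫⁻ s in Set.Icc (1 : ℝ) (2 * R), J s)
        = ∫⁻ z in Set.Ici (1 : ℝ), (∫⁻ s in Set.Icc (1 : ℝ) (2 * R), κ2 s z) ∂m := by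
      simp only [hJdef]
      exact lintegral_lintegral_swap hκ2meas.aemeasurable
    rw [hswap]
    have := mid_bound m (Rv := R) hK hR2 hm
    simpa only [hκ2def] using this
  -- assemble everything
  calc (∫⁻ r in Set.Icc (1 : ℝ) R, ∫⁻ s in Set.Icc (r + h / 4) (r + 3 * h / 4),
        ∫⁻ z in Set.Ici (1 : ℝ) \ Set.Icc r (r + h),
          (ENNReal.ofReal (2 * (1 + |s - z|) ^ q))⁻¹ ∂m)
      ≤ c * ∫⁻ r in Set.Icc (1 : ℝ) R,
          ∫⁻ s in Set.Icc (r + h / 4) (r + 3 * h / 4), J s := stepB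
    _ ≤ c * (ENNReal.ofReal (h / 2) * ∫⁻ s in Set.Icc (1 : ℝ) (2 * R), J s) :=
        mul_le_mul_right stepC _
    _ ≤ c * (ENNReal.ofReal (h / 2) * ENNReal.ofReal (18 * K * Real.log R)) :=
        mul_le_mul_right (mul_le_mul_right stepD _) _
    _ = ENNReal.ofReal ((4 / h) ^ (q - 2) * (h / 2 * (18 * K * Real.log R))) := by
        rw [hcdef, ← ENNReal.ofReal_mul (by positivity), ← ENNReal.ofReal_mul
          (Real.rpow_nonneg (by positivity) _)]
    _ ≤ ENNReal.ofReal (4 ^ q * K * h ^ (3 - q) * Real.log R) :=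
        ENNReal.ofReal_le_ofReal (final_arith hq hh hK hR2)
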